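/- Let x* ∈ Ω, α > 0, and let 𝐱* := 𝟏_N ⊗ x* ∈ ℝ^{Nn} be the stacked vector whose i-th block equals x* for every agent i. Then the following statements are equivalent: (i) x* is a Nash equilibrium of the game; (ii) 𝐱* solves the variational inequality VI(F_a, 𝛀), i.e., 𝐱* ∈ 𝛀 and ⟨F_a(𝐱*), 𝐲 − 𝐱*⟩ ≥ 0 for all 𝐲 ∈ 𝛀; (iii) 0 ∈ F_a(𝐱*) + N_𝛀(𝐱*). -/

import Mathlib

open scoped InnerProductSpace
open Filter Topology Set

lemma slope_tendsto {E : Type*} [NormedAddCommGroup E] [InnerProductSpace ℝ E] [CompleteSpace E]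
    {f : E → ℝ} {g x : E} (hg : HasGradientAt f g x) (v : E) :
    Tendsto (fun t : ℝ => (f (x + t • v) - f x) / t) (𝓝[>] (0:ℝ)) (𝓝 ⟪g, v⟫_ℝ) := by
  have hline : HasDerivAt (fun t : ℝ => x + t • v) v 0 := by
    simpa using ((hasDerivAt_id (0:ℝ)).smul_const v).const_add x
  have hφ : HasDerivAt (fun t : ℝ => f (x + t • v)) ⟪g, v⟫_ℝ 0 := by
    have hf' : HasFDerivAt f (InnerProductSpace.toDual ℝ E g) ((fun t : ℝ => x + t • v) 0) := by
      simpa using hg.hasFDerivAt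
    have h := hf'.comp_hasDerivAt 0 hline
    simpa [InnerProductSpace.toDual_apply_apply, Function.comp_def] using h
  have h2 := (hasDerivAt_iff_tendsto_slope.mp hφ).mono_left
      (nhdsWithin_mono 0 (fun t ht => Set.mem_compl_singleton_iff.mpr (ne_of_gt ht)))
  refine h2.congr' ?_
  filter_upwards [self_mem_nhdsWithin] with t ht
  simp [slope_def_field]

lemma grad_ineq {E : Type*} [NormedAddCommGroup E] [InnerProductSpace ℝ E] [CompleteSpace E]
    {f : E → ℝ} {g x : E} (hf : ConvexOn ℝ Set.univ f) (hg : HasGradientAt f g x)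
    (y : E) : ⟪g, y - x⟫_ℝ ≤ f y - f x := by
  refine le_of_tendsto (slope_tendsto hg (y - x)) ?_
  filter_upwards [Ioc_mem_nhdsGT_of_mem (Set.left_mem_Ico.mpr one_pos)] with t ht
  have hconv := hf.2 (Set.mem_univ x) (Set.mem_univ y)
      (show (0:ℝ) ≤ 1 - t by linarith [ht.2]) ht.1.le (by ring : (1 - t) + t = 1)
  have hpt : (1 - t) • x + t • y = x + t • (y - x) := by module
  rw [hpt] at hconv
  simp only [smul_eq_mul] at hconv
  rw [div_le_iff₀ ht.1]
  nlinarith [hconv]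

lemma grad_nonneg_of_min {E : Type*} [NormedAddCommGroup E] [InnerProductSpace ℝ E] [CompleteSpace E]
    {f : E → ℝ} {g x : E} {S : Set E} (hS : Convex ℝ S) (hxS : x ∈ S)
    (hmin : ∀ z ∈ S, f x ≤ f z) (hg : HasGradientAt f g x)
    {y : E} (hyS : y ∈ S) : 0 ≤ ⟪g, y - x⟫_ℝ := by
  refine ge_of_tendsto (slope_tendsto hg (y - x)) ?_
  filter_upwards [Ioc_mem_nhdsGT_of_mem (Set.left_mem_Ico.mpr one_pos)] with t ht
  have hmem : x + t • (y - x) ∈ S := by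
    have := hS hxS hyS (show (0:ℝ) ≤ 1 - t by linarith [ht.2]) ht.1.le (by ring : (1 - t) + t = 1)
    have hpt : (1 - t) • x + t • y = x + t • (y - x) := by module
    rwa [hpt] at this
  exact div_nonneg (by linarith [hmin _ hmem]) ht.1.le


/-- The strategy-profile space `ℝ^n = ℝ^{n_1} × ⋯ × ℝ^{n_N}`, with the Euclidean (ℓ²)
structure. Block `i` is agent `i`'s strategy space `ℝ^{n_i}`. -/
abbrev Prof (N : ℕ) (d : Fin N → ℕ) : Type :=
  PiLp 2 (fun i : Fin N => EuclideanSpace ℝ (Fin (d i)))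

/-- The stacked space `ℝ^{Nn}` of all agents' estimates; block `i` is agent `i`'s estimate
`𝐱_i ∈ ℝ^n` of the full strategy profile. -/
abbrev Est (N : ℕ) (d : Fin N → ℕ) : Type :=
  PiLp 2 (fun _ : Fin N => Prof N d)

/-- The pseudo-gradient `F(x) := col(∇_{x_i} J_i(x_i, x_{−i}))_i`, built from the partial
gradients `G i`. -/
noncomputable def pseudoGrad {N : ℕ} {d : Fin N → ℕ}
    (G : ∀ i : Fin N, Prof N d → EuclideanSpace ℝ (Fin (d i)))
    (x : Prof N d) : Prof N d :=
  WithLp.toLp 2 (fun i => G i x)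

/-- The extended pseudo-gradient `𝐅(𝐱) := col(∇_{x_i} J_i(𝐱_{i,i}, 𝐱_{i,−i}))_i`. -/
noncomputable def extPseudoGrad {N : ℕ} {d : Fin N → ℕ}
    (G : ∀ i : Fin N, Prof N d → EuclideanSpace ℝ (Fin (d i)))
    (bx : Est N d) : Prof N d :=
  WithLp.toLp 2 (fun i => G i (bx i))

/-- `Rᵀ` places block `i` of `v ∈ ℝ^n` in the `(i,i)`-block position of `ℝ^{Nn}`,
with zeros elsewhere. -/
noncomputable def RT {N : ℕ} {d : Fin N → ℕ} (v : Prof N d) : Est N d :=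
  WithLp.toLp 2 (fun i => WithLp.toLp 2 (Function.update (0 : Prof N d) i (v i)))

/-- `𝐖 = W ⊗ I_n` acting blockwise: `(𝐖𝐱)_i = Σ_j w_{ij} 𝐱_j`. -/
noncomputable def Wact {N : ℕ} {d : Fin N → ℕ} (W : Matrix (Fin N) (Fin N) ℝ) (bx : Est N d) : Est N d :=
  WithLp.toLp 2 (fun i => ∑ j, W i j • bx j)

/-- `F_a(𝐱) := α Rᵀ𝐅(𝐱) + (I_{Nn} − 𝐖)𝐱`. -/
noncomputable def Fa {N : ℕ} {d : Fin N → ℕ} (α : ℝ)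
    (G : ∀ i : Fin N, Prof N d → EuclideanSpace ℝ (Fin (d i)))
    (W : Matrix (Fin N) (Fin N) ℝ) (bx : Est N d) : Est N d :=
  α • RT (extPseudoGrad G bx) + (bx - Wact W bx)

/-- `𝛀 := {𝐱 ∈ ℝ^{Nn} : 𝐱_{i,i} ∈ Ω_i for all i}`. -/
def bigOmega {N : ℕ} {d : Fin N → ℕ}
    (Ω : ∀ i : Fin N, Set (EuclideanSpace ℝ (Fin (d i)))) : Set (Est N d) :=
  {bx | ∀ i, bx i i ∈ Ω i}

/-- Normal cone operator of a closed convex set `S` at `x`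
(empty if `x ∉ S`). -/
def normalCone {E : Type*} [NormedAddCommGroup E] [InnerProductSpace ℝ E]
    (S : Set E) (x : E) : Set E :=
  {v | x ∈ S ∧ ∀ z ∈ S, ⟪v, z - x⟫_ℝ ≤ 0}

/-- The consensus subspace `E_n := {𝟏_N ⊗ y : y ∈ ℝ^n} ⊆ ℝ^{Nn}`. -/
def consensus (N : ℕ) (d : Fin N → ℕ) : Set (Est N d) :=
  {bx | ∃ y : Prof N d, ∀ i, bx i = y}

lemma inner_RT {N : ℕ} {d : Fin N → ℕ} (v : Prof N d) (z : Est N d) :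
    ⟪RT v, z⟫_ℝ = ∑ i, ⟪v i, z i i⟫_ℝ := by
  rw [PiLp.inner_apply]
  refine Finset.sum_congr rfl fun i _ => ?_
  rw [PiLp.inner_apply]
  rw [Finset.sum_eq_single i]
  · simp [RT]
  · intro k _ hk
    simp [RT, Function.update_of_ne hk]
  · simp

/-- Lemma 1 of the paper. Under the standing assumptions, for `x* ∈ Ω`,
`α > 0` and `𝐱* := 𝟏_N ⊗ x*`, the following are equivalent: (i) `x*` is a Nash
equilibrium; (ii) `𝐱*` solves `VI(F_a, 𝛀)`; (iii) `0 ∈ F_a(𝐱*) + N_𝛀(𝐱*)`. -/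
theorem stmt5 {N : ℕ} {d : Fin N → ℕ}
    (Ω : ∀ i : Fin N, Set (EuclideanSpace ℝ (Fin (d i))))
    (hΩ : ∀ i, (Ω i).Nonempty ∧ IsClosed (Ω i) ∧ Convex ℝ (Ω i))
    (J : ∀ _ : Fin N, Prof N d → ℝ)
    (hJcont : ∀ i, Continuous (J i))
    (hJconv : ∀ i (x : Prof N d),
      ConvexOn ℝ Set.univ (fun y => J i (WithLp.toLp 2 (Function.update x i y))))
    (G : ∀ i : Fin N, Prof N d → EuclideanSpace ℝ (Fin (d i)))
    (hGgrad : ∀ i (x : Prof N d),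
      HasGradientAt (fun y => J i (WithLp.toLp 2 (Function.update x i y))) (G i x) (x i))
    (μ θ0 : ℝ) (hμ : 0 < μ) (hθ0 : 0 < θ0)
    (hFmon : ∀ x y : Prof N d,
      ⟪x - y, pseudoGrad G x - pseudoGrad G y⟫_ℝ ≥ μ * ‖x - y‖ ^ 2)
    (hFlip : ∀ x y : Prof N d, ‖pseudoGrad G x - pseudoGrad G y‖ ≤ θ0 * ‖x - y‖)
    (W : Matrix (Fin N) (Fin N) ℝ)
    (hWsymm : W.IsSymm) (hWnonneg : ∀ i j, 0 ≤ W i j)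
    (hWstoch : ∀ i, ∑ j, W i j = 1) (hWdiag : ∀ i, 0 < W i i)
    (hWconn : ∀ S : Finset (Fin N), S.Nonempty → S ≠ Finset.univ →
      ∃ i ∈ S, ∃ j ∉ S, 0 < W i j)
    (α : ℝ) (hα : 0 < α)
    (xstar : Prof N d) (hxstarΩ : ∀ i, xstar i ∈ Ω i)
    (bxstar : Est N d) (hbxstar : ∀ i, bxstar i = xstar) :
    -- (i) ↔ (ii)
    (((∀ i, xstar i ∈ Ω i) ∧
        ∀ i, ∀ y ∈ Ω i, J i xstar ≤ J i (WithLp.toLp 2 (Function.update xstar i y))) ↔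
      (bxstar ∈ bigOmega Ω ∧
        ∀ by_ ∈ bigOmega Ω, ⟪Fa α G W bxstar, by_ - bxstar⟫_ℝ ≥ 0)) ∧
    -- (ii) ↔ (iii)
    ((bxstar ∈ bigOmega Ω ∧
        ∀ by_ ∈ bigOmega Ω, ⟪Fa α G W bxstar, by_ - bxstar⟫_ℝ ≥ 0) ↔
      (∃ w ∈ normalCone (bigOmega Ω) bxstar, Fa α G W bxstar + w = 0)) := by

  classical
  set v : Prof N d := WithLp.toLp 2 (fun i => G i xstar) with hv
  have hFa : Fa α G W bxstar = α • RT v := by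
    have h1 : extPseudoGrad G bxstar = v := by
      ext1 i; simp [extPseudoGrad, hbxstar, hv]
    have h2 : Wact W bxstar = bxstar := by
      ext1 i
      show ∑ j, W i j • bxstar j = bxstar i
      calc ∑ j, W i j • bxstar j = ∑ j, W i j • xstar := by simp [hbxstar]
        _ = (∑ j, W i j) • xstar := by rw [Finset.sum_smul]
        _ = xstar := by rw [hWstoch i, one_smul]
        _ = bxstar i := (hbxstar i).symm
    simp [Fa, h1, h2]
  have hsub : ∀ (by_ : Est N d) (i : Fin N), (by_ - bxstar) i i = by_ i i - xstar i := by
    intro by_ i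
    have : (by_ - bxstar) i i = by_ i i - bxstar i i := rfl
    rw [this, hbxstar i]
  have hinner : ∀ by_ : Est N d,
      ⟪Fa α G W bxstar, by_ - bxstar⟫_ℝ = α * ∑ i, ⟪v i, by_ i i - xstar i⟫_ℝ := by
    intro by_
    rw [hFa, real_inner_smul_left, inner_RT]
    congr 1
    exact Finset.sum_congr rfl fun i _ => by rw [hsub by_ i]
  have hbxmem : bxstar ∈ bigOmega Ω := by
    intro i
    simpa [hbxstar i] using hxstarΩ i
  have hper : ∀ i, (∀ y ∈ Ω i, J i xstar ≤ J i (WithLp.toLp 2 (Function.update xstar i y))) ↔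
      (∀ y ∈ Ω i, 0 ≤ ⟪v i, y - xstar i⟫_ℝ) := by
    intro i
    constructor
    · intro hmin y hy
      refine grad_nonneg_of_min (hΩ i).2.2 (hxstarΩ i) ?_ (hGgrad i xstar) hy
      intro z hz
      simpa [Function.update_eq_self] using hmin z hz
    · intro hvi y hy
      have h1 := grad_ineq (hJconv i xstar) (hGgrad i xstar) y
      have h0 := hvi y hy
      simp only [Function.update_eq_self, WithLp.toLp_ofLp] at h1
      simp only [hv] at h0
      linarith
  constructor
  · constructor
    · rintro ⟨-, hmin⟩
      refine ⟨hbxmem, ?_⟩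
      intro by_ hby
      rw [ge_iff_le, hinner by_]
      exact mul_nonneg hα.le (Finset.sum_nonneg fun i _ =>
        (hper i).mp (hmin i) _ (hby i))
    · rintro ⟨-, hVI⟩
      refine ⟨hxstarΩ, fun i => (hper i).mpr fun y hy => ?_⟩
      set by_ : Est N d := WithLp.toLp 2 (Function.update bxstar.ofLp i (WithLp.toLp 2 (Function.update xstar.ofLp i y))) with hby_
      have hbymem : by_ ∈ bigOmega Ω := by
        intro j
        by_cases hj : j = i
        · subst hj
          simp only [hby_, Function.update_self]
          simpa using hy
        · simp only [hby_, Function.update_of_ne hj, hbxstar j]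
          exact hxstarΩ j
      have hge := hVI by_ hbymem
      rw [ge_iff_le, hinner by_] at hge
      have hsum : ∑ k, ⟪v k, by_ k k - xstar k⟫_ℝ = ⟪v i, y - xstar i⟫_ℝ := by
        rw [Finset.sum_eq_single i]
        · simp [hby_]
        · intro k _ hk
          simp [hby_, Function.update_of_ne hk, hbxstar k]
        · simp
      rw [hsum] at hge
      nlinarith [hge, hα]
  · constructor
    · rintro ⟨hmem, hVI⟩
      refine ⟨-(Fa α G W bxstar), ⟨hmem, ?_⟩, add_neg_cancel _⟩
      intro z hz
      have := hVI z hz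
      rw [inner_neg_left]
      linarith
    · rintro ⟨w, ⟨hmem, hw⟩, heq⟩
      refine ⟨hmem, ?_⟩
      intro z hz
      have hw' := hw z hz
      have hF : Fa α G W bxstar = -w := eq_neg_of_add_eq_zero_left heq
      rw [ge_iff_le, hF, inner_neg_left]
      linarith
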